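/- Let A1, A2 ⊆ ℝ be Lebesgue measurable sets of positive Lebesgue measure and let D ⊆ ℝ be dense in ℝ. Then there exists d ∈ D such that the set ((A1 + d)/2) ∩ A2 (i.e., {x ∈ A2 : 2x - d ∈ A1}) has positive Lebesgue measure. -/

import Mathlib

open MeasureTheory Set Filter Topology
open scoped ENNReal symmDiff Pointwise

-- bounded positive-measure subset
lemma aux_bounded (A : Set ℝ) (hm : MeasurableSet A) (h : 0 < volume A) :
    ∃ B, B ⊆ A ∧ MeasurableSet B ∧ 0 < volume B ∧ volume B < ⊤ := by
  by_contra hc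
  push_neg at hc
  have hz : ∀ n : ℕ, volume (A ∩ Metric.ball 0 n) = 0 := by
    intro n
    by_contra h0
    have h1 : 0 < volume (A ∩ Metric.ball 0 n) := pos_iff_ne_zero.mpr h0
    have h2 : volume (A ∩ Metric.ball 0 n) < ⊤ :=
      lt_of_le_of_lt (measure_mono inter_subset_right) measure_ball_lt_top
    exact absurd h2 (not_lt.mpr (hc _ inter_subset_left (hm.inter measurableSet_ball) h1))
  have hA : A = ⋃ n : ℕ, A ∩ Metric.ball 0 n := by
    ext x
    simp only [mem_iUnion, mem_inter_iff, Metric.mem_ball]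
    constructor
    · intro hx
      obtain ⟨n, hn⟩ := exists_nat_gt (dist x 0)
      exact ⟨n, hx, hn⟩
    · rintro ⟨n, hx, _⟩; exact hx
  have : volume A = 0 := by
    rw [hA]; exact measure_iUnion_null hz
  exact absurd this h.ne'

-- translation continuity of symmetric difference measure
lemma aux_tendsto (B : Set ℝ) (hB : MeasurableSet B) (hBfin : volume B ≠ ⊤) (t0 : ℝ) :
    Tendsto (fun t => volume ((t +ᵥ B) ∆ (t0 +ᵥ B))) (𝓝 t0) (𝓝 0) := by
  have hpre : ∀ t : ℝ, (fun z => z - t) ⁻¹' B = t +ᵥ B := by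
    intro t
    ext z
    simp only [mem_preimage, Set.mem_vadd_set_iff_neg_vadd_mem, vadd_eq_add]
    ring_nf
  have hcont : Continuous fun t : ℝ => ContinuousMap.mk (fun z : ℝ => z - t)
      (by continuity) := by
    apply ContinuousMap.continuous_of_continuous_uncurry
    exact continuous_snd.sub continuous_fst
  have := tendsto_measure_symmDiff_preimage_nhds_zero
    (μ := volume) (ν := volume)
    (f := fun t : ℝ => ContinuousMap.mk (fun z : ℝ => z - t) (by continuity))
    (g := ContinuousMap.mk (fun z : ℝ => z - t0) (by continuity))
    (hcont.tendsto t0)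
    (Eventually.of_forall fun t => measurePreserving_sub_right volume t)
    (measurePreserving_sub_right volume t0)
    hB.nullMeasurableSet hBfin
  simpa only [ContinuousMap.coe_mk, hpre] using this

theorem stmt0 (A1 A2 D : Set ℝ) (hA1m : MeasurableSet A1) (hA2m : MeasurableSet A2)
    (h1 : 0 < volume A1) (h2 : 0 < volume A2) (hD : Dense D) :
    ∃ d ∈ D, 0 < volume {x ∈ A2 | 2 * x - d ∈ A1} := by
  -- B1 = (1/2) • A1 as a preimage
  set B1 : Set ℝ := (fun x : ℝ => 2 * x) ⁻¹' A1 with hB1def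
  have hB1m : MeasurableSet B1 := hA1m.preimage (by fun_prop)
  have hB1pos : 0 < volume B1 := by
    have heq : B1 = (2⁻¹ : ℝ) • A1 := by
      ext x
      simp only [hB1def, mem_preimage, Set.mem_smul_set, smul_eq_mul]
      constructor
      · intro hx; exact ⟨2 * x, hx, by ring⟩
      · rintro ⟨a, ha, rfl⟩
        have h2a : (2:ℝ) * (2⁻¹ * a) = a := by ring
        rwa [h2a]
    rw [heq, Measure.addHaar_smul]
    simp only [Module.finrank_self, pow_one]
    exact ENNReal.mul_pos (ENNReal.ofReal_pos.mpr (by norm_num)).ne' h1.ne'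
  obtain ⟨B, hBsub, hBm, hBpos, hBfin⟩ := aux_bounded B1 hB1m hB1pos
  obtain ⟨A, hAsub, hAm, hApos, hAfin⟩ := aux_bounded A2 hA2m h2
  -- Fubini: ∫ volume (A ∩ (t +ᵥ B)) dt = volume A * volume B > 0
  classical
  have hmem : ∀ (t x : ℝ), x ∈ t +ᵥ B ↔ x - t ∈ B := by
    intro t x
    rw [Set.mem_vadd_set_iff_neg_vadd_mem]
    simp [vadd_eq_add, sub_eq_neg_add]
  have key : ∫⁻ t : ℝ, volume (A ∩ (t +ᵥ B)) = volume A * volume B := by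
    have step1 : ∀ t : ℝ, volume (A ∩ (t +ᵥ B)) =
        ∫⁻ x, A.indicator 1 x * B.indicator 1 (x - t) := by
      intro t
      have hmv : MeasurableSet (t +ᵥ B) := by
        have : (t +ᵥ B) = (fun z : ℝ => z - t) ⁻¹' B := by
          ext z; simp [Set.mem_vadd_set_iff_neg_vadd_mem, sub_eq_neg_add]
        rw [this]; exact hBm.preimage (by fun_prop)
      rw [← lintegral_indicator_one (hAm.inter hmv)]
      congr 1
      ext x
      by_cases hx : x ∈ A <;> by_cases hy : x ∈ t +ᵥ B <;>
        simp [Set.indicator_apply, hx, hy, (hmem t x).symm]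
    calc ∫⁻ t : ℝ, volume (A ∩ (t +ᵥ B))
        = ∫⁻ t : ℝ, ∫⁻ x : ℝ, A.indicator 1 x * B.indicator 1 (x - t) := by
          simp_rw [step1]
      _ = ∫⁻ x : ℝ, ∫⁻ t : ℝ, A.indicator 1 x * B.indicator 1 (x - t) := by
          rw [lintegral_lintegral_swap]
          apply Measurable.aemeasurable
          apply Measurable.mul
          · exact (measurable_one.indicator hAm : Measurable (A.indicator (1 : ℝ → ℝ≥0∞))) |>.comp measurable_snd
          · exact ((measurable_one.indicator hBm : Measurable (B.indicator (1 : ℝ → ℝ≥0∞)))).comp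
              (measurable_snd.sub measurable_fst)
      _ = ∫⁻ x : ℝ, A.indicator 1 x * ∫⁻ t : ℝ, B.indicator 1 (x - t) := by
          congr 1; ext x; rw [lintegral_const_mul]
          exact ((measurable_one.indicator hBm : Measurable (B.indicator (1 : ℝ → ℝ≥0∞)))).comp
            (measurable_const.sub measurable_id)
      _ = ∫⁻ x : ℝ, A.indicator 1 x * volume B := by
          congr 1; ext x
          congr 1
          rw [(Measure.measurePreserving_sub_left volume x).lintegral_comp
            ((measurable_one.indicator hBm : Measurable (B.indicator (1 : ℝ → ℝ≥0∞))))]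
          exact lintegral_indicator_one hBm
      _ = volume A * volume B := by
          rw [lintegral_mul_const _ ((measurable_one.indicator hAm : Measurable (A.indicator (1 : ℝ → ℝ≥0∞)))),
            lintegral_indicator_one hAm]
  -- find t0 with positive intersection
  have hex : ∃ t0 : ℝ, 0 < volume (A ∩ (t0 +ᵥ B)) := by
    by_contra hc
    push_neg at hc
    have : ∫⁻ t : ℝ, volume (A ∩ (t +ᵥ B)) = 0 := by
      simp_rw [fun t => le_antisymm (hc t) zero_le]
      simp
    rw [key] at this
    exact absurd this (ENNReal.mul_pos hApos.ne' hBpos.ne').ne'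
  obtain ⟨t0, ht0⟩ := hex
  -- continuity: find δ such that symmDiff small for |t - t0| < δ
  have hev : ∀ᶠ t in 𝓝 t0, volume ((t +ᵥ B) ∆ (t0 +ᵥ B)) < volume (A ∩ (t0 +ᵥ B)) :=
    (aux_tendsto B hBm hBfin.ne t0).eventually_lt_const ht0
  rw [Metric.eventually_nhds_iff] at hev
  obtain ⟨δ, hδ, hδ'⟩ := hev
  -- choose d ∈ D with d/2 close to t0
  have hU : IsOpen {d : ℝ | dist (d / 2) t0 < δ} :=
    isOpen_lt (by fun_prop) continuous_const
  have hUne : {d : ℝ | dist (d / 2) t0 < δ}.Nonempty := ⟨2 * t0, by simpa using hδ⟩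
  obtain ⟨d, hdD, hdU⟩ := hD.exists_mem_open hU hUne
  refine ⟨d, hdD, ?_⟩
  set t := d / 2 with htdef
  have hpos : 0 < volume (A ∩ (t +ᵥ B)) := by
    by_contra hc
    push_neg at hc
    have hzero : volume (A ∩ (t +ᵥ B)) = 0 := le_antisymm hc zero_le
    have hsub : A ∩ (t0 +ᵥ B) ⊆ (A ∩ (t +ᵥ B)) ∪ ((t +ᵥ B) ∆ (t0 +ᵥ B)) := by
      rintro x ⟨hxA, hxB⟩
      by_cases hx : x ∈ t +ᵥ B
      · exact Or.inl ⟨hxA, hx⟩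
      · exact Or.inr (Or.inr ⟨hxB, hx⟩)
    have := measure_mono (μ := volume) hsub
    have hle := this.trans (measure_union_le _ _)
    rw [hzero, zero_add] at hle
    exact absurd (lt_of_le_of_lt hle (hδ' hdU)) (lt_irrefl _)
  refine lt_of_lt_of_le hpos (measure_mono ?_)
  rintro x ⟨hxA, hxB⟩
  refine ⟨hAsub hxA, ?_⟩
  have : x - t ∈ B := by
    rw [Set.mem_vadd_set_iff_neg_vadd_mem] at hxB
    simpa [sub_eq_neg_add] using hxB
  have := hBsub this
  simp only [hB1def, mem_preimage] at this
  have h2 : (2:ℝ) * (x - t) ∈ A1 := this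
  have heq : 2 * x - d = 2 * (x - t) := by rw [htdef]; ring
  rwa [heq]
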